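/- Let X = (ω+1) × ω, and for m, k < ω let B_{m,k} = {(n,k) : m ≤ n ≤ ω} ∪ {(ω,ℓ) : k ≤ ℓ < ω}. Let 𝓣 consist of all B_{m,k}, all two-element sets {(ω,k),(ω,ℓ)} with k ≠ ℓ, and X itself. Then for every two distinct points of X there is a smallest member of 𝓣 containing both. -/
import Mathlib


/-- The ball `B_{m,k} = {(n,k) : m ≤ n ≤ ω} ∪ {(ω,ℓ) : k ≤ ℓ < ω}` in
`X = (ω+1) × ω`, modelled as `ℕ∞ × ℕ`. -/
def Bmk (m k : ℕ) : Set (ℕ∞ × ℕ) :=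
  {p | (p.2 = k ∧ (m : ℕ∞) ≤ p.1) ∨ (p.1 = ⊤ ∧ k ≤ p.2)}

/-- The family `𝓣`: all balls `B_{m,k}`, all doubletons `{(ω,k),(ω,ℓ)}` with
`k ≠ ℓ`, and `X` itself. -/
def Tfam : Set (Set (ℕ∞ × ℕ)) :=
  {s | ∃ m k : ℕ, s = Bmk m k} ∪
    {s | ∃ k l : ℕ, k ≠ l ∧ s = {((⊤ : ℕ∞), k), ((⊤ : ℕ∞), l)}} ∪
    {Set.univ}

lemma mem_Bmk_top {l m k : ℕ} : ((⊤ : ℕ∞), l) ∈ Bmk m k ↔ k ≤ l := by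
  simp only [Bmk, Set.mem_setOf_eq, le_top, and_true, eq_self_iff_true, true_and]
  constructor
  · rintro (rfl | h) <;> omega
  · exact Or.inr

lemma mem_Bmk_coe {a i m k : ℕ} : ((a : ℕ∞), i) ∈ Bmk m k ↔ i = k ∧ m ≤ a := by
  simp [Bmk]

lemma Bmk_mono {m m' k : ℕ} (h : m ≤ m') : Bmk m' k ⊆ Bmk m k := by
  rintro ⟨x, y⟩ (⟨rfl, hx⟩ | hx)
  · exact Or.inl ⟨rfl, le_trans (by exact_mod_cast h) hx⟩
  · exact Or.inr hx

lemma ball_mem_Tfam {m k : ℕ} : Bmk m k ∈ Tfam := Or.inl (Or.inl ⟨m, k, rfl⟩)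

lemma pair_mem_Tfam {k l : ℕ} (h : k ≠ l) :
    ({((⊤ : ℕ∞), k), ((⊤ : ℕ∞), l)} : Set (ℕ∞ × ℕ)) ∈ Tfam :=
  Or.inl (Or.inr ⟨k, l, h, rfl⟩)

lemma univ_mem_Tfam : (Set.univ : Set (ℕ∞ × ℕ)) ∈ Tfam := Or.inr rfl

lemma Tfam_cases {t : Set (ℕ∞ × ℕ)} (ht : t ∈ Tfam) :
    (∃ m k : ℕ, t = Bmk m k) ∨
      (∃ k l : ℕ, k ≠ l ∧ t = {((⊤ : ℕ∞), k), ((⊤ : ℕ∞), l)}) ∨ t = Set.univ := by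
  rcases ht with (h | h) | h
  · exact Or.inl h
  · exact Or.inr (Or.inl h)
  · exact Or.inr (Or.inr h)

/-- Every two distinct points of `X = (ω+1) × ω` are contained in a smallest
member of `𝓣`. -/
theorem smallest_ball_exists :
    ∀ p q : ℕ∞ × ℕ, p ≠ q →
      ∃ s ∈ Tfam, p ∈ s ∧ q ∈ s ∧ ∀ t ∈ Tfam, p ∈ t → q ∈ t → s ⊆ t := by
  rintro ⟨a, i⟩ ⟨b, j⟩ hne
  induction a using ENat.recTopCoe with
  | top =>
    induction b using ENat.recTopCoe with
    | top =>
      -- both at ω: doubleton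
      have hij : i ≠ j := by
        intro h; exact hne (by rw [h])
      refine ⟨{((⊤ : ℕ∞), i), ((⊤ : ℕ∞), j)}, pair_mem_Tfam hij, by simp, by simp, ?_⟩
      intro t ht hp hq
      exact Set.insert_subset hp (Set.singleton_subset_iff.2 hq)
    | coe b =>
      rcases le_or_gt j i with hji | hij
      · -- smallest is Bmk b j
        refine ⟨Bmk b j, ball_mem_Tfam, mem_Bmk_top.2 hji, mem_Bmk_coe.2 ⟨rfl, le_rfl⟩, ?_⟩
        intro t ht hp hq
        rcases Tfam_cases ht with ⟨m, k, rfl⟩ | ⟨k, l, hkl, rfl⟩ | rfl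
        · obtain ⟨rfl, hm⟩ := mem_Bmk_coe.1 hq
          exact Bmk_mono hm
        · simp at hq
        · exact Set.subset_univ _
      · -- only univ
        refine ⟨Set.univ, univ_mem_Tfam, trivial, trivial, ?_⟩
        intro t ht hp hq
        rcases Tfam_cases ht with ⟨m, k, rfl⟩ | ⟨k, l, hkl, rfl⟩ | rfl
        · obtain ⟨rfl, hm⟩ := mem_Bmk_coe.1 hq
          have := mem_Bmk_top.1 hp
          omega
        · simp at hq
        · exact subset_rfl
  | coe a =>
    induction b using ENat.recTopCoe with
    | top =>
      rcases le_or_gt i j with hij | hji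
      · refine ⟨Bmk a i, ball_mem_Tfam, mem_Bmk_coe.2 ⟨rfl, le_rfl⟩, mem_Bmk_top.2 hij, ?_⟩
        intro t ht hp hq
        rcases Tfam_cases ht with ⟨m, k, rfl⟩ | ⟨k, l, hkl, rfl⟩ | rfl
        · obtain ⟨rfl, hm⟩ := mem_Bmk_coe.1 hp
          exact Bmk_mono hm
        · simp at hp
        · exact Set.subset_univ _
      · refine ⟨Set.univ, univ_mem_Tfam, trivial, trivial, ?_⟩
        intro t ht hp hq
        rcases Tfam_cases ht with ⟨m, k, rfl⟩ | ⟨k, l, hkl, rfl⟩ | rfl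
        · obtain ⟨rfl, hm⟩ := mem_Bmk_coe.1 hp
          have := mem_Bmk_top.1 hq
          omega
        · simp at hp
        · exact subset_rfl
    | coe b =>
      rcases eq_or_ne i j with rfl | hij
      · -- same column, smallest is Bmk (min a b) i
        refine ⟨Bmk (min a b) i, ball_mem_Tfam,
          mem_Bmk_coe.2 ⟨rfl, min_le_left _ _⟩, mem_Bmk_coe.2 ⟨rfl, min_le_right _ _⟩, ?_⟩
        intro t ht hp hq
        rcases Tfam_cases ht with ⟨m, k, rfl⟩ | ⟨k, l, hkl, rfl⟩ | rfl
        · obtain ⟨rfl, hma⟩ := mem_Bmk_coe.1 hp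
          obtain ⟨-, hmb⟩ := mem_Bmk_coe.1 hq
          exact Bmk_mono (le_min hma hmb)
        · simp at hp
        · exact Set.subset_univ _
      · refine ⟨Set.univ, univ_mem_Tfam, trivial, trivial, ?_⟩
        intro t ht hp hq
        rcases Tfam_cases ht with ⟨m, k, rfl⟩ | ⟨k, l, hkl, rfl⟩ | rfl
        · obtain ⟨rfl, -⟩ := mem_Bmk_coe.1 hp
          obtain ⟨h, -⟩ := mem_Bmk_coe.1 hq
          exact absurd h.symm hij
        · simp at hp
        · exact subset_rfl
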